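/- Let A be an abelian group, m ≥ 2 an integer, and ĥ : A → ℝ≥0 a function satisfying ĥ(mQ) = m² ĥ(Q) and the parallelogram law. Suppose: (i) there exists ε > 0 such that {P ∈ A : ĥ(P) ≤ ε} is finite; and (ii) A/mA is finite. Then for every M > 0, the set {P ∈ A : ĥ(P) ≤ M} is finite. -/

import Mathlib

/-- Let `A` be an abelian group, `m ≥ 2`, and `ĥ : A → ℝ≥0` a function with
`ĥ(mQ) = m²ĥ(Q)` and the parallelogram law.  If for some `ε > 0` the set of
points of height at most `ε` is finite, and `A/mA` is finite, then for every
`M > 0` the set of points of height at most `M` is finite. -/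
theorem stmt_11 {A : Type*} [AddCommGroup A] (m : ℕ) (hm : 2 ≤ m)
    (h : A → ℝ) (hpos : ∀ P : A, 0 ≤ h P)
    (hquad : ∀ Q : A, h (m • Q) = (m : ℝ) ^ 2 * h Q)
    (hpar : ∀ P Q : A, h (P + Q) + h (P - Q) = 2 * h P + 2 * h Q)
    (hsmall : ∃ ε : ℝ, 0 < ε ∧ {P : A | h P ≤ ε}.Finite)
    (hquot : ∃ S : Finset A, ∀ P : A, ∃ Q ∈ S, ∃ R : A, P = Q + m • R) :
    ∀ M : ℝ, 0 < M → {P : A | h P ≤ M}.Finite := by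
  classical
  by_contra hcon
  push_neg at hcon
  obtain ⟨M₀, _, hM₀inf⟩ := hcon
  obtain ⟨ε, hε, hεfin⟩ := hsmall
  obtain ⟨S, hS⟩ := hquot
  set 𝓜 : Set ℝ := {M | {P : A | h P ≤ M}.Infinite} with h𝓜
  have hne : 𝓜.Nonempty := ⟨M₀, hM₀inf⟩
  have hbdd : ∀ M ∈ 𝓜, ε ≤ M := by
    intro M hM
    by_contra hlt
    push_neg at hlt
    exact hM (hεfin.subset fun P hP => le_trans hP hlt.le)
  set C := sInf 𝓜 with hC
  have hCpos : 0 < C := lt_of_lt_of_le hε (le_csInf hne hbdd)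
  have hfin_lt : ∀ M' : ℝ, M' < C → {P : A | h P ≤ M'}.Finite := by
    intro M' hM'
    by_contra hinf
    rw [← Set.not_infinite, not_not] at hinf
    exact absurd (csInf_le ⟨ε, hbdd⟩ hinf) (not_le.mpr hM')
  have hTinf : {P : A | h P ≤ C + C / 3}.Infinite := by
    obtain ⟨M, hM, hMlt⟩ := exists_lt_of_csInf_lt hne (show C < C + C / 3 by linarith)
    exact hM.mono fun P hP => le_trans hP hMlt.le
  -- pigeonhole over the coset representatives
  have hpig : ∃ Q₀ ∈ S, {P : A | h P ≤ C + C / 3 ∧ ∃ R : A, P = Q₀ + m • R}.Infinite := by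
    by_contra hc
    push_neg at hc
    have hsub : {P : A | h P ≤ C + C / 3} ⊆
        ⋃ Q ∈ S, {P : A | h P ≤ C + C / 3 ∧ ∃ R : A, P = Q + m • R} := by
      intro P hP
      obtain ⟨Q, hQ, R, hR⟩ := hS P
      exact Set.mem_biUnion hQ ⟨hP, R, hR⟩
    exact hTinf ((Set.Finite.biUnion S.finite_toSet
      fun Q hQ => hc Q hQ).subset hsub)
  obtain ⟨Q₀, _, hT'inf⟩ := hpig
  set T' := {P : A | h P ≤ C + C / 3 ∧ ∃ R : A, P = Q₀ + m • R} with hT'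
  set ρ : A → A := fun P => if hP : ∃ R : A, P = Q₀ + m • R then hP.choose else 0 with hρdef
  have hρ : ∀ P ∈ T', P = Q₀ + m • ρ P := by
    intro P hP
    obtain ⟨-, hex⟩ := hP
    simp only [hρdef, dif_pos hex]
    exact hex.choose_spec
  have hρinj : Set.InjOn ρ T' := by
    intro P hP P' hP' hPP
    rw [hρ P hP, hρ P' hP', hPP]
  obtain ⟨P₀, hP₀⟩ := hT'inf.nonempty
  have hdiff : ∀ P ∈ T', P - P₀ = m • (ρ P - ρ P₀) := by
    intro P hP
    calc P - P₀ = (Q₀ + m • ρ P) - (Q₀ + m • ρ P₀) := by rw [← hρ P hP, ← hρ P₀ hP₀]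
    _ = m • (ρ P - ρ P₀) := by rw [smul_sub]; abel
  have hbound : ∀ P ∈ T',
      (m : ℝ) ^ 2 * h (ρ P - ρ P₀) + h (P + P₀) = 2 * h P + 2 * h P₀ := by
    intro P hP
    have h1 := hpar P P₀
    rw [hdiff P hP, hquad] at h1
    linarith
  have hCfin : {P : A | h P ≤ 2 * C / 3}.Finite := hfin_lt _ (by linarith)
  -- a generic way to reach a contradiction
  have key : ∀ (f : A → A) (T : Set A), T ⊆ T' → Set.InjOn f T →
      (∀ P ∈ T, h (f P) ≤ 2 * C / 3) → ¬ T.Infinite := by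
    intro f T _ hinj hb hinf
    have himg : f '' T ⊆ {P : A | h P ≤ 2 * C / 3} := by
      rintro _ ⟨P, hP, rfl⟩
      exact hb P hP
    exact (hCfin.subset himg).not_infinite (Set.Infinite.image hinj hinf)
  rcases eq_or_lt_of_le hm with hm2 | hm3
  · -- m = 2 : the refined argument
    have hm2' : (m : ℝ) = 2 := by rw [← hm2]; norm_num
    have hsum : ∀ P ∈ T', h (ρ P - ρ P₀) + h (P - (ρ P - ρ P₀)) ≤ C + C / 3 := by
      intro P hP
      have hplus : P + P₀ = m • (P - (ρ P - ρ P₀)) := by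
        have hd := hdiff P hP
        rw [← hm2, two_smul] at hd ⊢
        calc P + P₀ = P + P - (P - P₀) := by abel
        _ = P + P - (ρ P - ρ P₀ + (ρ P - ρ P₀)) := by rw [hd]
        _ = P - (ρ P - ρ P₀) + (P - (ρ P - ρ P₀)) := by abel
      have hb := hbound P hP
      rw [hplus, hquad, hm2'] at hb
      nlinarith [hP.1, hP₀.1]
    set T₁ := {P ∈ T' | h (ρ P - ρ P₀) ≤ 2 * C / 3} with hT₁
    set T₂ := {P ∈ T' | h (P - (ρ P - ρ P₀)) ≤ 2 * C / 3} with hT₂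
    have hcover : T' ⊆ T₁ ∪ T₂ := by
      intro P hP
      by_contra hn
      simp only [Set.mem_union, hT₁, hT₂, Set.mem_setOf_eq, not_or, not_and, not_le] at hn
      have := hsum P hP
      linarith [hn.1 hP, hn.2 hP]
    rcases Set.infinite_union.mp (hT'inf.mono hcover) with h1 | h2
    · refine key (fun P => ρ P - ρ P₀) T₁ (fun P hP => hP.1) ?_ (fun P hP => hP.2) h1
      intro P hP P' hP' hPP
      simp only at hPP
      exact hρinj hP.1 hP'.1 (by linear_combination (norm := abel) hPP)
    · refine key (fun P => P - (ρ P - ρ P₀)) T₂ (fun P hP => hP.1) ?_ (fun P hP => hP.2) h2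
      intro P hP P' hP' hPP
      simp only at hPP
      have e1 : P - (ρ P - ρ P₀) = Q₀ + ρ P + ρ P₀ := by
        nth_rewrite 1 [hρ P hP.1]
        rw [← hm2, two_smul]; abel
      have e2 : P' - (ρ P' - ρ P₀) = Q₀ + ρ P' + ρ P₀ := by
        nth_rewrite 1 [hρ P' hP'.1]
        rw [← hm2, two_smul]; abel
      rw [e1, e2] at hPP
      have : ρ P = ρ P' := by
        have := hPP
        abel_nf at this
        linear_combination (norm := abel) this
      exact hρinj hP.1 hP'.1 this
  · -- m ≥ 3 : the simple bound suffices
    have hm3' : (3 : ℝ) ≤ (m : ℝ) := by exact_mod_cast hm3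
    refine key (fun P => ρ P - ρ P₀) T' (le_refl _) ?_ ?_ hT'inf
    · intro P hP P' hP' hPP
      simp only at hPP
      exact hρinj hP hP' (by linear_combination (norm := abel) hPP)
    · intro P hP
      have hb := hbound P hP
      have hm9 : (9 : ℝ) ≤ (m : ℝ) ^ 2 := by nlinarith
      have hx := mul_nonneg (by linarith : (0 : ℝ) ≤ (m : ℝ) ^ 2 - 9) (hpos (ρ P - ρ P₀))
      nlinarith [hpos (ρ P - ρ P₀), hpos (P + P₀), hP.1, hP₀.1]
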